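/- Suppose (Z_{i,j}) is a family of elements of a ℚ-vector space indexed by pairs i,j ≥ 0 with i + j < n, satisfying Z_{j,k} = Z_{k,j} and Z_{j,k} = Z_{j+1,k} + Z_{j,k+1} whenever j + k + 1 < n. If f(s,t) = ∑_{i,j} a_{ij} s^i t^j ∈ ℚ[s,t] (with a_{ij} = 0 for i + j ≥ n) satisfies f(s,t) + f(t,s) ∈ (s + t - 1), then ∑_{i,j} a_{ij} Z_{i,j} = 0. -/

import Mathlib

open Finset MvPolynomial

section Aux

variable {M : Type*} [AddCommGroup M] (n : ℕ) (Z : ℕ → ℕ → M)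

/-- Extension of `Z` to all levels: `Wfun n Z d j` is the value at `(j, d - j)`. -/
def Wfun : ℕ → ℕ → M
  | d, 0 => if d < n then Z 0 d else 0
  | d, j + 1 => if d < n then Z (j + 1) (d - (j + 1)) else Wfun (d - 1) j - Wfun d j

lemma Wfun_lt {d : ℕ} (h : d < n) (j : ℕ) : Wfun n Z d j = Z j (d - j) := by
  cases j <;> simp [Wfun, h]

lemma Wfun_ge {d : ℕ} (h : n ≤ d) (j : ℕ) :
    Wfun n Z d (j + 1) = Wfun n Z (d - 1) j - Wfun n Z d j := by
  rw [Wfun]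
  simp [Nat.not_lt.mpr h]

lemma Wfun_pascal (hpascal : ∀ j k : ℕ, j + k + 1 < n → Z j k = Z (j + 1) k + Z j (k + 1))
    (j k : ℕ) :
    Wfun n Z (j + k) j = Wfun n Z (j + k + 1) (j + 1) + Wfun n Z (j + k + 1) j := by
  by_cases h : j + k + 1 < n
  · rw [Wfun_lt n Z (by omega) j, Wfun_lt n Z h (j + 1), Wfun_lt n Z h j]
    rw [show j + k - j = k from by omega, show j + k + 1 - (j + 1) = k from by omega,
      show j + k + 1 - j = k + 1 from by omega]
    exact hpascal j k h
  · rw [Wfun_ge n Z (by omega) j, show j + k + 1 - 1 = j + k from by omega]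
    abel

end Aux

theorem stmt_15 (M : Type*) [AddCommGroup M] [Module ℚ M] (n : ℕ)
    (Z : ℕ → ℕ → M)
    (hsym : ∀ j k : ℕ, j + k < n → Z j k = Z k j)
    (hpascal : ∀ j k : ℕ, j + k + 1 < n → Z j k = Z (j + 1) k + Z j (k + 1))
    (a : ℕ → ℕ → ℚ) (hsupp : ∀ i j : ℕ, n ≤ i + j → a i j = 0)
    (hideal :
      (∑ i ∈ range n, ∑ j ∈ range n,
          C (a i j) * X (0 : Fin 2) ^ i * X 1 ^ j) +
        (∑ i ∈ range n, ∑ j ∈ range n,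
          C (a i j) * X (1 : Fin 2) ^ i * X 0 ^ j)
        ∈ Ideal.span {(X 0 + X 1 - 1 : MvPolynomial (Fin 2) ℚ)}) :
    ∑ i ∈ range n, ∑ j ∈ range n, a i j • Z i j = 0 := by
  classical
  -- the linear functional sending `s^i t^j` to `Wfun n Z (i+j) i`
  set φ : MvPolynomial (Fin 2) ℚ →ₗ[ℚ] M :=
    (Finsupp.linearCombination ℚ (fun d : Fin 2 →₀ ℕ => Wfun n Z (d 0 + d 1) (d 0)) :
      ((Fin 2 →₀ ℕ) →₀ ℚ) →ₗ[ℚ] M) ∘ₗ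
      (AddMonoidAlgebra.coeffLinearEquiv ℚ).toLinearMap with hφ
  have φ_monomial : ∀ (d : Fin 2 →₀ ℕ) (c : ℚ),
      φ (monomial d c) = c • Wfun n Z (d 0 + d 1) (d 0) := by
    intro d c
    rw [hφ, ← single_eq_monomial]
    simp
  -- φ kills multiples of X 0 + X 1 - 1
  have φ_mul : ∀ g : MvPolynomial (Fin 2) ℚ, φ (g * (X 0 + X 1 - 1)) = 0 := by
    intro g
    conv_lhs => rw [g.as_sum, Finset.sum_mul, map_sum]
    refine Finset.sum_eq_zero fun d _ => ?_
    have h1 : (monomial d (coeff d g)) * (X 0 + X 1 - 1)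
        = monomial (d + Finsupp.single (0:Fin 2) (1:ℕ)) (coeff d g)
          + monomial (d + Finsupp.single (1:Fin 2) (1:ℕ)) (coeff d g) - monomial d (coeff d g) := by
      rw [mul_sub, mul_add, mul_one, X, monomial_mul, X, monomial_mul, mul_one]
    rw [h1, map_sub, map_add, φ_monomial, φ_monomial, φ_monomial]
    have e00 : (d + Finsupp.single (0 : Fin 2) (1:ℕ)) 0 = d 0 + 1 := by simp
    have e01 : (d + Finsupp.single (0 : Fin 2) (1:ℕ)) 1 = d 1 := by
      simp [Finsupp.single_apply]
    have e10 : (d + Finsupp.single (1 : Fin 2) (1:ℕ)) 0 = d 0 := by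
      simp [Finsupp.single_apply]
    have e11 : (d + Finsupp.single (1 : Fin 2) (1:ℕ)) 1 = d 1 + 1 := by simp
    rw [e00, e01, e10, e11, show d 0 + 1 + d 1 = d 0 + d 1 + 1 from by omega,
      show d 0 + (d 1 + 1) = d 0 + d 1 + 1 from by omega,
      Wfun_pascal n Z hpascal (d 0) (d 1), smul_add]
    abel
  -- value of φ on the monomial C (a i j) * X u ^ i * X v ^ j
  have key : ∀ (c : ℚ) (i j : ℕ),
      φ (C c * X (0 : Fin 2) ^ i * X 1 ^ j) = c • Wfun n Z (i + j) i := by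
    intro c i j
    rw [C_mul_X_pow_eq_monomial, X_pow_eq_monomial, monomial_mul, mul_one, φ_monomial]
    congr 2 <;> simp [Finsupp.single_apply]
  have key' : ∀ (c : ℚ) (i j : ℕ),
      φ (C c * X (1 : Fin 2) ^ i * X 0 ^ j) = c • Wfun n Z (j + i) j := by
    intro c i j
    rw [C_mul_X_pow_eq_monomial, X_pow_eq_monomial, monomial_mul, mul_one, φ_monomial]
    congr 2 <;> simp [Finsupp.single_apply]
  obtain ⟨g, hg⟩ := Ideal.mem_span_singleton'.mp hideal
  have hφ0 : φ ((∑ i ∈ range n, ∑ j ∈ range n,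
          C (a i j) * X (0 : Fin 2) ^ i * X 1 ^ j) +
        (∑ i ∈ range n, ∑ j ∈ range n,
          C (a i j) * X (1 : Fin 2) ^ i * X 0 ^ j)) = 0 := by
    rw [← hg, φ_mul]
  rw [map_add, map_sum, map_sum] at hφ0
  simp only [map_sum, key, key'] at hφ0
  have h1 : ∀ i ∈ range n, ∀ j ∈ range n,
      a i j • Wfun n Z (i + j) i = a i j • Z i j := by
    intro i _ j _
    by_cases h : i + j < n
    · rw [Wfun_lt n Z h, Nat.add_sub_cancel_left]
    · rw [hsupp i j (by omega), zero_smul, zero_smul]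
  have h2 : ∀ i ∈ range n, ∀ j ∈ range n,
      a i j • Wfun n Z (j + i) j = a i j • Z i j := by
    intro i _ j _
    by_cases h : i + j < n
    · rw [Wfun_lt n Z (by omega), Nat.add_sub_cancel_left, ← hsym i j h]
    · rw [hsupp i j (by omega), zero_smul, zero_smul]
  rw [Finset.sum_congr rfl (fun i hi => Finset.sum_congr rfl (h1 i hi)),
    Finset.sum_congr rfl (fun i hi => Finset.sum_congr rfl (h2 i hi))] at hφ0
  have h3 : (2 : ℚ) • (∑ i ∈ range n, ∑ j ∈ range n, a i j • Z i j) = 0 := by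
    rw [two_smul]; exact hφ0
  have := congrArg (fun x => (2⁻¹ : ℚ) • x) h3
  simpa [smul_smul] using this
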